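/- Under hypotheses H1–H3, let μ be a Φ_A-invariant Borel probability measure with μ(S_0) = 0 (i.e., μ gives full measure to the set of states where every species is present). Then r_i(μ) = 0 for all i = 1,…,m. -/
import Mathlib


open MeasureTheory Filter Topology

noncomputable section

namespace RP

/-- The state space: species `i` has `n i` individual states;
points are tuples of row vectors. -/
abbrev St (m : ℕ) (n : Fin m → ℕ) := ∀ i : Fin m, Fin (n i) → ℝ

/-- A block-diagonal collection of matrices, one block per species. -/
abbrev Blocks (m : ℕ) (n : Fin m → ℕ) := ∀ i : Fin m, Matrix (Fin (n i)) (Fin (n i)) ℝ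

variable {m : ℕ} {n : Fin m → ℕ}

/-- The nonnegative cone `ℝ^n_+`. -/
def cone (m : ℕ) (n : Fin m → ℕ) : Set (St m n) := {x | ∀ i j, 0 ≤ x i j}

/-- The ℓ¹-norm `‖x^i‖` of the subvector of species `i`. -/
def snorm (x : St m n) (i : Fin m) : ℝ := ∑ j, |x i j|

/-- The extinction set `S₀ = {x ∈ ℝ^n_+ : ∏ᵢ ‖x^i‖ = 0}`. -/
def extinct (m : ℕ) (n : Fin m → ℕ) : Set (St m n) :=
  {x ∈ cone m n | ∏ i, snorm x i = 0}

/-- The update map `Φ_A (x) = x A(x)` (blockwise, row vectors on the left). -/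
def Phi (A : St m n → Blocks m n) (x : St m n) : St m n :=
  fun i => Matrix.vecMul (x i) (A x i)

/-- An explicit norm on matrices (sum of absolute values of the entries). -/
def mnorm {a b : Type*} [Fintype a] [Fintype b] (M : Matrix a b ℝ) : ℝ :=
  ∑ j, ∑ k, |M j k|

/-- The matrix cocycle `A_i(X_0) A_i(X_1) ⋯ A_i(X_{t-1})` along the orbit of `x`. -/
def coc (A : St m n → Blocks m n) (i : Fin m) (x : St m n) :
    ℕ → Matrix (Fin (n i)) (Fin (n i)) ℝ
  | 0 => 1
  | t + 1 => coc A i x t * A ((Phi A)^[t] x) i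

/-- The long-term growth rate `r_i(x)` of species `i` starting from `x`. -/
def rate (A : St m n → Blocks m n) (i : Fin m) (x : St m n) : ℝ :=
  Filter.limsup (fun t : ℕ => Real.log (mnorm (coc A i x t)) / t) Filter.atTop

/-- The long-term growth rate `r_i(μ) = ∫ r_i dμ`. -/
def rateMu (A : St m n → Blocks m n) (i : Fin m) (μ : Measure (St m n)) : ℝ :=
  ∫ x, rate A i x ∂μ

/-- A nonnegative primitive matrix. -/
def IsPrimitive {d : ℕ} (P : Matrix (Fin d) (Fin d) ℝ) : Prop :=
  (∀ j k, 0 ≤ P j k) ∧ ∃ t : ℕ, 0 < t ∧ ∀ j k, 0 < (P ^ t) j k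

/-- Hypotheses H1–H3 of the model. -/
structure Hyp (A : St m n → Blocks m n) (SA : Set (St m n)) : Prop where
  H1cont : Continuous A
  H1nonneg : ∀ x i j k, 0 ≤ A x i j k
  H2 : ∀ i, ∃ P : Matrix (Fin (n i)) (Fin (n i)) ℝ, IsPrimitive P ∧
    ∀ x ∈ cone m n, ∀ j k, (A x i j k = 0 ↔ P j k = 0)
  H3compact : IsCompact SA
  H3sub : SA ⊆ cone m n
  H3absorb : ∀ x ∈ cone m n, ∃ T : ℕ, ∀ t ≥ T, (Phi A)^[t] x ∈ SA

/-- The ω-limit set of `x` under iteration of `f`. -/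
def omegaSet {X : Type*} [TopologicalSpace X] (f : X → X) (x : X) : Set X :=
  {y | ∃ tk : ℕ → ℕ, StrictMono tk ∧ Tendsto (fun s => f^[tk s] x) atTop (𝓝 y)}

/-- `M` is an isolated invariant set for `f` restricted to `Y`: it has a compact
neighborhood `N` in `Y` whose largest invariant subset is contained in `M`. -/
def IsolatedIn {X : Type*} [TopologicalSpace X] (f : X → X) (M Y : Set X) : Prop :=
  ∃ N : Set X, IsCompact N ∧ N ⊆ Y ∧ M ⊆ N ∧ (∀ x ∈ M, N ∈ 𝓝[Y] x) ∧
    ∀ K ⊆ N, f '' K = K → K ⊆ M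

/-- `M ⊆ S₀` is unsaturated: isolated in all of `ℝ^n_+` and its stable set
lies in `S₀`. -/
def Unsaturated (A : St m n → Blocks m n) (M : Set (St m n)) : Prop :=
  IsolatedIn (Phi A) M (cone m n) ∧
    ∀ x ∈ cone m n, omegaSet (Phi A) x ⊆ M → x ∈ extinct m n

/-- The δ-neighborhood of a set within the cone. -/
def nbhd (S : Set (St m n)) (δ : ℝ) : Set (St m n) :=
  {x ∈ cone m n | ∃ y ∈ S, dist x y < δ}

/-- A δ-perturbation of the model `(A, S_A)`. -/
structure Pert (A : St m n → Blocks m n) (SA : Set (St m n)) (δ : ℝ)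
    (B : St m n → Blocks m n) (SB : Set (St m n)) : Prop where
  hyp : Hyp B SB
  sub : SB ⊆ nbhd SA δ
  close : ∀ x ∈ nbhd SA 1, ∀ i j k, |A x i j k - B x i j k| ≤ δ

/-- Permanence with repulsion constant `η`. -/
def PermanentWith (f : St m n → St m n) (η : ℝ) : Prop :=
  ∀ x ∈ cone m n, (∀ i, 0 < snorm x i) →
    ∃ T : ℕ, ∀ t ≥ T, ∀ i, η < snorm (f^[t] x) i

/-- Permanence. -/
def Permanent (f : St m n → St m n) : Prop := ∃ η > 0, PermanentWith f η

/-- Robust permanence: all sufficiently small perturbations are permanent with a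
common constant. -/
def RobustlyPermanent (A : St m n → Blocks m n) (SA : Set (St m n)) : Prop :=
  ∃ δ > 0, ∃ η > 0, ∀ B SB, Pert A SA δ B SB → PermanentWith (Phi B) η

/-- The global attractor `G_A`. -/
def GA (A : St m n → Blocks m n) (SA : Set (St m n)) : Set (St m n) :=
  ⋂ s : ℕ, closure (⋃ t ∈ Set.Ici s, (Phi A)^[t] '' SA)

/-- A backward orbit through `x` lying in `M`. -/
def BackOrbit {X : Type*} (f : X → X) (M : Set X) (x : X) (σ : ℕ → X) : Prop :=
  σ 0 = x ∧ (∀ s, f (σ (s + 1)) = σ s) ∧ ∀ s, σ s ∈ M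

/-- The α-limit set of a backward orbit. -/
def alphaSet {X : Type*} [TopologicalSpace X] (σ : ℕ → X) : Set X :=
  {y | ∃ sk : ℕ → ℕ, StrictMono sk ∧ Tendsto (fun s => σ (sk s)) atTop (𝓝 y)}

/-- A Morse decomposition `{M_1, …, M_k}` of a compact invariant set `M` for `f`. -/
def MorseDecomp {X : Type*} [TopologicalSpace X] (f : X → X) (M : Set X)
    {k : ℕ} (Ms : Fin k → Set X) : Prop :=
  (∀ a b, a ≠ b → Disjoint (Ms a) (Ms b)) ∧
  (∀ a, Ms a ⊆ M ∧ IsCompact (Ms a) ∧ f '' Ms a = Ms a ∧ IsolatedIn f (Ms a) M) ∧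
  (∀ x ∈ M \ ⋃ a, Ms a, ∃ a, omegaSet f x ⊆ Ms a ∧
    ∀ σ : ℕ → X, BackOrbit f M x σ → ∃ b, a < b ∧ alphaSet σ ⊆ Ms b)

/-- `μ` is a weak* limit point of the sequence of measures `Lam`. -/
def WeakLimitPt {X : Type*} [TopologicalSpace X] [MeasurableSpace X]
    (Lam : ℕ → Measure X) (μ : Measure X) : Prop :=
  ∃ tk : ℕ → ℕ, StrictMono tk ∧
    ∀ g : BoundedContinuousFunction X ℝ,
      Tendsto (fun s => ∫ y, g y ∂(Lam (tk s))) atTop (𝓝 (∫ y, g y ∂μ))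

/-- The empirical occupation measures `Lam_t(x) = (1/t) ∑_{s<t} δ_{f^s(x)}`. -/
def emp {X : Type*} [MeasurableSpace X] (f : X → X) (x : X) (t : ℕ) : Measure X :=
  (t : ENNReal)⁻¹ • ∑ s ∈ Finset.range t, Measure.dirac (f^[s] x)

/-- An invariant Borel probability measure for `f`. -/
def InvProb {X : Type*} [MeasurableSpace X] (f : X → X) (μ : Measure X) : Prop :=
  IsProbabilityMeasure μ ∧ μ.map f = μ

end RP

namespace RP

variable {m : ℕ} {n : Fin m → ℕ} {A : St m n → Blocks m n} {SA : Set (St m n)}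

/-! ### Auxiliary lemmas -/

lemma pos_iff_ne {a : ℝ} (h : 0 ≤ a) : 0 < a ↔ a ≠ 0 :=
  ⟨fun h' => h'.ne', fun h' => h.lt_of_ne (Ne.symm h')⟩

lemma sum_mul_pos_iff {d : ℕ} {b c : Fin d → ℝ} (hb : ∀ l, 0 ≤ b l) (hc : ∀ l, 0 ≤ c l) :
    0 < ∑ l, b l * c l ↔ ∃ l, 0 < b l ∧ 0 < c l := by
  constructor
  · intro h
    by_contra hcon
    push_neg at hcon
    have : ∑ l, b l * c l = 0 := by
      apply Finset.sum_eq_zero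
      intro l _
      rcases lt_or_eq_of_le (hb l) with hbl | hbl
      · have := hcon l hbl
        have : c l = 0 := le_antisymm this (hc l)
        simp [this]
      · simp [← hbl]
    linarith
  · rintro ⟨l, hbl, hcl⟩
    exact Finset.sum_pos' (fun l _ => mul_nonneg (hb l) (hc l))
      ⟨l, Finset.mem_univ l, mul_pos hbl hcl⟩

lemma mnorm_nonneg {a b : Type*} [Fintype a] [Fintype b] (M : Matrix a b ℝ) : 0 ≤ mnorm M :=
  Finset.sum_nonneg fun _ _ => Finset.sum_nonneg fun _ _ => abs_nonneg _

lemma mnorm_pos {a b : Type*} [Fintype a] [Fintype b] {M : Matrix a b ℝ}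
    (h : ∃ j k, M j k ≠ 0) : 0 < mnorm M := by
  obtain ⟨j, k, hjk⟩ := h
  refine Finset.sum_pos' (fun _ _ => Finset.sum_nonneg fun _ _ => abs_nonneg _)
    ⟨j, Finset.mem_univ j, ?_⟩
  exact Finset.sum_pos' (fun _ _ => abs_nonneg _) ⟨k, Finset.mem_univ k, abs_pos.2 hjk⟩

lemma mnorm_mul_le {d : ℕ} (B C : Matrix (Fin d) (Fin d) ℝ) :
    mnorm (B * C) ≤ mnorm B * mnorm C := by
  have h1 : mnorm (B * C) ≤ ∑ j, ∑ l, |B j l| * (∑ k, |C l k|) := by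
    unfold mnorm
    refine Finset.sum_le_sum fun j _ => ?_
    have : ∀ k, |(B * C) j k| ≤ ∑ l, |B j l| * |C l k| := by
      intro k
      rw [Matrix.mul_apply]
      refine (Finset.abs_sum_le_sum_abs _ _).trans ?_
      refine Finset.sum_le_sum fun l _ => ?_
      rw [abs_mul]
    calc ∑ k, |(B * C) j k| ≤ ∑ k, ∑ l, |B j l| * |C l k| :=
          Finset.sum_le_sum fun k _ => this k
      _ = ∑ l, ∑ k, |B j l| * |C l k| := Finset.sum_comm
      _ = ∑ l, |B j l| * ∑ k, |C l k| := by
          refine Finset.sum_congr rfl fun l _ => ?_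
          rw [Finset.mul_sum]
  refine h1.trans ?_
  have hrow : ∀ l, (∑ k, |C l k|) ≤ mnorm C := fun l =>
    Finset.single_le_sum (f := fun l' => ∑ k, |C l' k|)
      (fun _ _ => Finset.sum_nonneg fun _ _ => abs_nonneg _) (Finset.mem_univ l)
  calc ∑ j, ∑ l, |B j l| * (∑ k, |C l k|)
      ≤ ∑ j, ∑ l, |B j l| * mnorm C :=
        Finset.sum_le_sum fun j _ => Finset.sum_le_sum fun l _ =>
          mul_le_mul_of_nonneg_left (hrow l) (abs_nonneg _)
    _ = mnorm B * mnorm C := by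
        unfold mnorm
        rw [Finset.sum_mul]
        exact Finset.sum_congr rfl fun j _ => (Finset.sum_mul _ _ _).symm

/-! ### Dynamics lemmas -/

variable {A : St m n → Blocks m n} {SA : Set (St m n)}

lemma phi_mem_cone (hA : Hyp A SA) {x : St m n} (hx : x ∈ cone m n) :
    Phi A x ∈ cone m n := by
  intro i j
  simp only [Phi, Matrix.vecMul, dotProduct]
  exact Finset.sum_nonneg fun l _ => mul_nonneg (hx i l) (hA.H1nonneg x i l j)

lemma iterate_mem_cone (hA : Hyp A SA) {x : St m n} (hx : x ∈ cone m n) (t : ℕ) :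
    (Phi A)^[t] x ∈ cone m n := by
  induction t with
  | zero => simpa using hx
  | succ t ih => rw [Function.iterate_succ_apply']; exact phi_mem_cone hA ih

lemma iterate_apply_eq_vecMul_coc (A : St m n → Blocks m n) (i : Fin m) (x : St m n) (t : ℕ) :
    ((Phi A)^[t] x) i = Matrix.vecMul (x i) (coc A i x t) := by
  induction t with
  | zero => simp [coc, Matrix.vecMul_one]
  | succ t ih =>
      rw [Function.iterate_succ_apply']
      show Matrix.vecMul (((Phi A)^[t] x) i) (A ((Phi A)^[t] x) i) = _
      rw [ih, Matrix.vecMul_vecMul]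
      rfl

/-- Partial cocycle from time `s`, length `t`. -/
def pcoc (A : St m n → Blocks m n) (i : Fin m) (x : St m n) (s : ℕ) :
    ℕ → Matrix (Fin (n i)) (Fin (n i)) ℝ
  | 0 => 1
  | t + 1 => pcoc A i x s t * A ((Phi A)^[s + t] x) i

lemma coc_eq_pcoc (A : St m n → Blocks m n) (i : Fin m) (x : St m n) (t : ℕ) :
    coc A i x t = pcoc A i x 0 t := by
  induction t with
  | zero => rfl
  | succ t ih => show coc A i x t * _ = pcoc A i x 0 t * _; rw [ih, Nat.zero_add]

lemma pcoc_add (A : St m n → Blocks m n) (i : Fin m) (x : St m n) (s t u : ℕ) :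
    pcoc A i x s (t + u) = pcoc A i x s t * pcoc A i x (s + t) u := by
  induction u with
  | zero => simp [pcoc]
  | succ u ih =>
      show pcoc A i x s (t + u) * _ = _ * (pcoc A i x (s + t) u * _)
      rw [ih, mul_assoc, Nat.add_assoc]
      rfl

lemma pcoc_nonneg (hA : Hyp A SA) (i : Fin m) (x : St m n) (s t : ℕ) :
    ∀ j k, 0 ≤ pcoc A i x s t j k := by
  induction t with
  | zero =>
      intro j k
      show (0:ℝ) ≤ (1 : Matrix _ _ ℝ) j k
      rw [Matrix.one_apply]
      split <;> norm_num
  | succ t ih =>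
      intro j k
      show (0:ℝ) ≤ (pcoc A i x s t * A ((Phi A)^[s + t] x) i) j k
      rw [Matrix.mul_apply]
      exact Finset.sum_nonneg fun l _ => mul_nonneg (ih j l) (hA.H1nonneg _ i l k)

lemma coc_nonneg (hA : Hyp A SA) (i : Fin m) (x : St m n) (t : ℕ) :
    ∀ j k, 0 ≤ coc A i x t j k := by
  rw [coc_eq_pcoc]; exact pcoc_nonneg hA i x 0 t

lemma pow_entry_nonneg {d : ℕ} {P : Matrix (Fin d) (Fin d) ℝ} (hP : ∀ j k, 0 ≤ P j k) :
    ∀ t j k, 0 ≤ (P ^ t) j k := by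
  intro t
  induction t with
  | zero =>
      intro j k
      rw [pow_zero, Matrix.one_apply]
      split <;> norm_num
  | succ t ih =>
      intro j k
      rw [pow_succ, Matrix.mul_apply]
      exact Finset.sum_nonneg fun l _ => mul_nonneg (ih j l) (hP l k)

lemma pcoc_pos_iff (hA : Hyp A SA) {i : Fin m} {P : Matrix (Fin (n i)) (Fin (n i)) ℝ}
    (hPnn : ∀ j k, 0 ≤ P j k)
    (hPat : ∀ y ∈ cone m n, ∀ j k, (A y i j k = 0 ↔ P j k = 0))
    {x : St m n} (hx : x ∈ cone m n) (s t : ℕ) :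
    ∀ j k, (0 < pcoc A i x s t j k ↔ 0 < (P ^ t) j k) := by
  induction t with
  | zero =>
      intro j k
      show 0 < (1 : Matrix _ _ ℝ) j k ↔ 0 < (P ^ 0) j k
      rw [pow_zero]
  | succ t ih =>
      intro j k
      show 0 < (pcoc A i x s t * A ((Phi A)^[s+t] x) i) j k ↔ _
      rw [Matrix.mul_apply, pow_succ, Matrix.mul_apply]
      rw [sum_mul_pos_iff (fun l => pcoc_nonneg hA i x s t j l)
        (fun l => hA.H1nonneg _ i l k)]
      rw [sum_mul_pos_iff (fun l => pow_entry_nonneg hPnn t j l) (fun l => hPnn l k)]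
      constructor
      · rintro ⟨l, h1, h2⟩
        refine ⟨l, (ih j l).1 h1, ?_⟩
        rw [pos_iff_ne (hPnn l k)]
        rw [pos_iff_ne (hA.H1nonneg _ i l k)] at h2
        exact fun hz => h2 ((hPat _ (iterate_mem_cone hA hx (s+t)) l k).2 hz)
      · rintro ⟨l, h1, h2⟩
        refine ⟨l, (ih j l).2 h1, ?_⟩
        rw [pos_iff_ne (hA.H1nonneg _ i l k)]
        rw [pos_iff_ne (hPnn l k)] at h2
        exact fun hz => h2 ((hPat _ (iterate_mem_cone hA hx (s+t)) l k).1 hz)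

/-! ### Facts about powers of a primitive matrix -/

lemma primitive_no_zero_column {d : ℕ} {P : Matrix (Fin d) (Fin d) ℝ}
    (hP : IsPrimitive P) (hd : 0 < d) : ∀ k, ∃ l, 0 < P l k := by
  obtain ⟨hnn, t0, ht0, hpos⟩ := hP
  intro k
  obtain ⟨s, rfl⟩ : ∃ s, t0 = s + 1 := ⟨t0 - 1, by omega⟩
  have := hpos ⟨0, hd⟩ k
  rw [pow_succ, Matrix.mul_apply] at this
  rw [sum_mul_pos_iff (fun l => pow_entry_nonneg hnn s _ l) (fun l => hnn l k)] at this
  obtain ⟨l, _, h⟩ := this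
  exact ⟨l, h⟩

lemma primitive_pow_pos {d : ℕ} {P : Matrix (Fin d) (Fin d) ℝ}
    (hP : IsPrimitive P) (hd : 0 < d) :
    ∃ t0 : ℕ, 0 < t0 ∧ ∀ t ≥ t0, ∀ j k, 0 < (P ^ t) j k := by
  obtain ⟨hnn, t0, ht0, hpos⟩ := hP
  refine ⟨t0, ht0, ?_⟩
  intro t ht
  induction t, ht using Nat.le_induction with
  | base => exact hpos
  | succ t ht ih =>
      intro j k
      rw [pow_succ, Matrix.mul_apply,
        sum_mul_pos_iff (fun l => pow_entry_nonneg hnn t j l) (fun l => hnn l k)]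
      obtain ⟨l, hl⟩ := primitive_no_zero_column ⟨hnn, t0, ht0, hpos⟩ hd k
      exact ⟨l, ih j l, hl⟩

lemma primitive_pow_ne_zero {d : ℕ} {P : Matrix (Fin d) (Fin d) ℝ}
    (hP : IsPrimitive P) (hd : 0 < d) (t : ℕ) : ∃ j k, 0 < (P ^ t) j k := by
  obtain ⟨t0, ht0, hpos⟩ := primitive_pow_pos hP hd
  have h := hpos (t + t0) (by omega) ⟨0, hd⟩ ⟨0, hd⟩
  rw [pow_add, Matrix.mul_apply,
    sum_mul_pos_iff (fun l => pow_entry_nonneg hP.1 t _ l)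
      (fun l => pow_entry_nonneg hP.1 t0 l _)] at h
  obtain ⟨l, h1, _⟩ := h
  exact ⟨_, l, h1⟩
/-! ### Norm comparison along orbits -/

lemma snorm_nonneg (x : St m n) (i : Fin m) : 0 ≤ snorm x i :=
  Finset.sum_nonneg fun _ _ => abs_nonneg _

lemma snorm_continuous (i : Fin m) : Continuous fun y : St m n => snorm y i := by
  unfold snorm
  exact continuous_finset_sum _ fun j _ => ((continuous_apply j).comp (continuous_apply i)).abs

lemma snorm_iterate_eq (hA : Hyp A SA) {x : St m n} (hx : x ∈ cone m n) (i : Fin m) (t : ℕ) :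
    snorm ((Phi A)^[t] x) i = ∑ k, ∑ j, x i j * coc A i x t j k := by
  unfold snorm
  refine Finset.sum_congr rfl fun k _ => ?_
  rw [abs_of_nonneg (iterate_mem_cone hA hx t i k), iterate_apply_eq_vecMul_coc]
  rfl

lemma entry_le_snorm {x : St m n} (i : Fin m) (j : Fin (n i)) : x i j ≤ snorm x i :=
  (le_abs_self _).trans
    (Finset.single_le_sum (f := fun j' => |x i j'|) (fun _ _ => abs_nonneg _) (Finset.mem_univ j))

lemma snorm_iterate_le (hA : Hyp A SA) {x : St m n} (hx : x ∈ cone m n) (i : Fin m) (t : ℕ) :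
    snorm ((Phi A)^[t] x) i ≤ snorm x i * mnorm (coc A i x t) := by
  rw [snorm_iterate_eq hA hx i t]
  calc ∑ k, ∑ j, x i j * coc A i x t j k
      ≤ ∑ k, ∑ j, snorm x i * coc A i x t j k := by
        refine Finset.sum_le_sum fun k _ => Finset.sum_le_sum fun j _ => ?_
        exact mul_le_mul_of_nonneg_right (entry_le_snorm i j) (coc_nonneg hA i x t j k)
    _ = snorm x i * mnorm (coc A i x t) := by
        unfold mnorm
        rw [Finset.mul_sum, Finset.sum_comm]
        refine Finset.sum_congr rfl fun j _ => ?_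
        rw [Finset.mul_sum]
        exact Finset.sum_congr rfl fun k _ => by
          rw [abs_of_nonneg (coc_nonneg hA i x t j k)]

/-! ### The key pointwise lemma -/

lemma rate_eq_zero_pointwise (hA : Hyp A SA) (i : Fin m) (hn : 0 < n i)
    {x : St m n} (hx : x ∈ cone m n) (hxi : 0 < snorm x i)
    {ε : ℝ} (hε : 0 < ε)
    (hrec : ∃ᶠ t in atTop, ε ≤ snorm ((Phi A)^[t] x) i) :
    rate A i x = 0 := by
  haveI : Nonempty (Fin (n i)) := ⟨⟨0, hn⟩⟩
  obtain ⟨P, hPprim, hPat⟩ := hA.H2 i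
  obtain ⟨t0, ht0, hPpos⟩ := primitive_pow_pos hPprim hn
  set a := snorm x i with ha
  -- positivity of mnorm of the cocycle
  have hcpos : ∀ t, 0 < mnorm (coc A i x t) := by
    intro t
    obtain ⟨j, k, hjk⟩ := primitive_pow_ne_zero hPprim hn t
    refine mnorm_pos ⟨j, k, ?_⟩
    have := (pcoc_pos_iff hA hPprim.1 hPat hx 0 t j k).2 hjk
    rw [coc_eq_pcoc]
    exact this.ne'
  -- the matrix D and constants
  set D := coc A i x t0 with hD
  have hDpos : ∀ j k, 0 < D j k := by
    intro j k
    rw [hD, coc_eq_pcoc]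
    exact (pcoc_pos_iff hA hPprim.1 hPat hx 0 t0 j k).2 (hPpos t0 le_rfl j k)
  have hmD : 0 < mnorm D := mnorm_pos ⟨⟨0, hn⟩, ⟨0, hn⟩, (hDpos _ _).ne'⟩
  set w := Matrix.vecMul (x i) D with hw
  have hwpos : ∀ l, 0 < w l := by
    intro l
    have hxj : ∃ j, 0 < x i j := by
      by_contra hcon
      push_neg at hcon
      have : snorm x i = 0 := by
        unfold snorm
        refine Finset.sum_eq_zero fun j _ => ?_
        rw [abs_of_nonneg (hx i j)]
        exact le_antisymm (hcon j) (hx i j)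
      rw [← ha] at this; linarith
    obtain ⟨j, hj⟩ := hxj
    show 0 < dotProduct (x i) fun j' => D j' l
    unfold dotProduct
    exact (sum_mul_pos_iff (fun l' => hx i l') (fun l' => (hDpos l' l).le)).2
      ⟨j, hj, hDpos j l⟩
  set c := Finset.univ.inf' Finset.univ_nonempty w with hcdef
  have hc : 0 < c := by
    rw [hcdef, Finset.lt_inf'_iff]
    exact fun l _ => hwpos l
  have hcw : ∀ l, c ≤ w l := fun l => Finset.inf'_le w (Finset.mem_univ l)
  have hapos : 0 < a := hxi
  -- upper comparison for t ≥ t0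
  have hupper : ∀ t ≥ t0, mnorm (coc A i x t) ≤ mnorm D / c * snorm ((Phi A)^[t] x) i := by
    intro t ht
    obtain ⟨u, rfl⟩ : ∃ u, t = t0 + u := ⟨t - t0, by omega⟩
    set R := pcoc A i x t0 u with hR
    have hsplit : coc A i x (t0 + u) = D * R := by
      rw [coc_eq_pcoc, pcoc_add A i x 0 t0 u, Nat.zero_add, hD, coc_eq_pcoc, hR]
    have hRnn := pcoc_nonneg hA i x t0 u
    have h1 : mnorm (coc A i x (t0 + u)) ≤ mnorm D * mnorm R := by
      rw [hsplit]; exact mnorm_mul_le D R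
    have h2 : c * mnorm R ≤ snorm ((Phi A)^[t0 + u] x) i := by
      rw [snorm_iterate_eq hA hx i (t0 + u)]
      have hform : ∀ k, ∑ j, x i j * coc A i x (t0 + u) j k = ∑ l, w l * R l k := by
        intro k
        have : (∑ j, x i j * coc A i x (t0 + u) j k) =
            Matrix.vecMul (x i) (coc A i x (t0 + u)) k := rfl
        rw [this, hsplit, ← Matrix.vecMul_vecMul, ← hw]
        rfl
      calc c * mnorm R = ∑ k, ∑ l, c * R l k := by
            unfold mnorm
            rw [Finset.mul_sum, Finset.sum_comm]
            refine Finset.sum_congr rfl fun l _ => ?_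
            rw [Finset.mul_sum]
            exact Finset.sum_congr rfl fun k _ => by rw [abs_of_nonneg (hRnn l k)]
        _ ≤ ∑ k, ∑ l, w l * R l k := by
            refine Finset.sum_le_sum fun k _ => Finset.sum_le_sum fun l _ => ?_
            exact mul_le_mul_of_nonneg_right (hcw l) (hRnn l k)
        _ = ∑ k, ∑ j, x i j * coc A i x (t0 + u) j k :=
            Finset.sum_congr rfl fun k _ => (hform k).symm
    rw [div_mul_eq_mul_div, le_div_iff₀ hc]
    calc mnorm (coc A i x (t0 + u)) * c ≤ (mnorm D * mnorm R) * c :=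
          mul_le_mul_of_nonneg_right h1 hc.le
      _ = mnorm D * (c * mnorm R) := by ring
      _ ≤ mnorm D * snorm ((Phi A)^[t0 + u] x) i :=
          mul_le_mul_of_nonneg_left h2 hmD.le
  -- bound on the orbit
  have hKex : ∃ K : ℝ, ∀ y ∈ SA, snorm y i ≤ K := by
    obtain ⟨K, hK⟩ := hA.H3compact.bddAbove_image (snorm_continuous i).continuousOn
    exact ⟨K, fun y hy => hK ⟨y, hy, rfl⟩⟩
  obtain ⟨K, hK⟩ := hKex
  obtain ⟨T, hT⟩ := hA.H3absorb x hx
  set K' := max K 1 with hK'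
  have hK'pos : (0:ℝ) < K' := lt_of_lt_of_le one_pos (le_max_right _ _)
  set C2 := mnorm D / c with hC2
  have hC2pos : 0 < C2 := div_pos hmD hc
  set B := Real.log (C2 * K') with hB
  have hlogB : ∀ t ≥ max T t0, Real.log (mnorm (coc A i x t)) ≤ B := by
    intro t ht
    refine Real.log_le_log (hcpos t) ?_
    calc mnorm (coc A i x t) ≤ C2 * snorm ((Phi A)^[t] x) i :=
          hupper t (le_trans (le_max_right _ _) ht)
      _ ≤ C2 * K' := by
          refine mul_le_mul_of_nonneg_left ?_ hC2pos.le
          exact (hK _ (hT t (le_trans (le_max_left _ _) ht))).trans (le_max_left _ _)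
  set L := Real.log (ε / a) with hL
  set u := fun t : ℕ => Real.log (mnorm (coc A i x t)) / t with hu
  -- eventual upper bounds
  have hub : ∀ᶠ t in atTop, u t ≤ |B| := by
    filter_upwards [eventually_ge_atTop (max T t0), eventually_ge_atTop 1] with t h1 h2
    have htpos : (0:ℝ) < t := by exact_mod_cast h2
    calc u t ≤ |B| / t := by
          rw [hu]
          exact div_le_div_of_nonneg_right ((hlogB t h1).trans (le_abs_self B)) htpos.le
      _ ≤ |B| := div_le_self (abs_nonneg B) (by exact_mod_cast h2)
  have hbdd : IsBoundedUnder (· ≤ ·) atTop u := ⟨|B|, eventually_map.2 hub⟩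
  -- frequent lower bounds
  have hfreq : ∀ δ : ℝ, 0 < δ → ∃ᶠ t in atTop, -δ ≤ u t := by
    intro δ hδ
    have hLt : Tendsto (fun t : ℕ => L / t) atTop (𝓝 0) :=
      tendsto_const_div_atTop_nhds_zero_nat L
    have hev : ∀ᶠ t : ℕ in atTop, -δ ≤ L / t :=
      hLt.eventually (eventually_ge_nhds (by linarith))
    refine ((hrec.and_eventually (hev.and (eventually_ge_atTop 1))).mono ?_)
    rintro t ⟨hsn, hLd, h1⟩
    have htpos : (0:ℝ) < t := by exact_mod_cast h1
    have hm : ε / a ≤ mnorm (coc A i x t) := by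
      rw [div_le_iff₀ hapos]
      calc ε ≤ snorm ((Phi A)^[t] x) i := hsn
        _ ≤ a * mnorm (coc A i x t) := snorm_iterate_le hA hx i t
        _ = mnorm (coc A i x t) * a := mul_comm _ _
    have : L ≤ Real.log (mnorm (coc A i x t)) := by
      rw [hL]
      exact Real.log_le_log (div_pos hε hapos) hm
    calc (-δ : ℝ) ≤ L / t := hLd
      _ ≤ u t := div_le_div_of_nonneg_right this htpos.le
  have hcob : IsCoboundedUnder (· ≤ ·) atTop u :=
    IsCoboundedUnder.of_frequently_ge (hfreq 1 one_pos)
  -- limsup bounds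
  have hlimle : ∀ δ : ℝ, 0 < δ → limsup u atTop ≤ δ := by
    intro δ hδ
    refine limsup_le_of_le hcob ?_
    have hBt : Tendsto (fun t : ℕ => B / t) atTop (𝓝 0) :=
      tendsto_const_div_atTop_nhds_zero_nat B
    have hev : ∀ᶠ t : ℕ in atTop, B / t ≤ δ := hBt.eventually (eventually_le_nhds hδ)
    filter_upwards [eventually_ge_atTop (max T t0), eventually_ge_atTop 1, hev] with t h1 h2 h3
    have htpos : (0:ℝ) < t := by exact_mod_cast h2
    calc u t ≤ B / t := div_le_div_of_nonneg_right (hlogB t h1) htpos.le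
      _ ≤ δ := h3
  have hlimge : ∀ δ : ℝ, 0 < δ → -δ ≤ limsup u atTop := fun δ hδ =>
    le_limsup_of_frequently_le (hfreq δ hδ) hbdd
  have h1 : limsup u atTop ≤ 0 :=
    le_of_forall_pos_le_add fun δ hδ => (hlimle δ hδ).trans (by linarith)
  have h2 : 0 ≤ limsup u atTop := by
    by_contra hcon
    push_neg at hcon
    have := hlimge (-(limsup u atTop) / 2) (by linarith)
    linarith
  have : limsup u atTop = 0 := le_antisymm h1 h2
  rw [rate, ← hu, this]
/-! ### Measure-theoretic lemmas -/

lemma cone_isClosed : IsClosed (cone m n) := by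
  have : cone m n = ⋂ i, ⋂ j, {x : St m n | 0 ≤ x i j} := by
    ext x; simp [cone, Set.mem_iInter]
  rw [this]
  exact isClosed_iInter fun i => isClosed_iInter fun j =>
    isClosed_le continuous_const ((continuous_apply j).comp (continuous_apply i))

lemma extinct_isClosed : IsClosed (extinct m n) := by
  have : extinct m n = cone m n ∩ ((fun x : St m n => ∏ i, snorm x i) ⁻¹' {0}) := by
    ext x; simp [extinct, Set.mem_setOf_eq]
  rw [this]
  exact cone_isClosed.inter
    ((isClosed_singleton).preimage (continuous_finset_prod _ fun i _ => snorm_continuous i))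

lemma phi_continuous (hA : Hyp A SA) : Continuous (Phi A) := by
  refine continuous_pi fun i => continuous_pi fun k => ?_
  show Continuous fun x => Matrix.vecMul (x i) (A x i) k
  have : (fun x : St m n => Matrix.vecMul (x i) (A x i) k) =
      fun x => ∑ j, x i j * A x i j k := rfl
  rw [this]
  refine continuous_finset_sum _ fun j _ => Continuous.mul ?_ ?_
  · exact (continuous_apply j).comp (continuous_apply i)
  · exact (continuous_apply k).comp ((continuous_apply j).comp
      ((continuous_apply i).comp hA.H1cont))

theorem rate_zero_of_interior_measure' {m : ℕ} {n : Fin m → ℕ}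
    (A : St m n → Blocks m n) (SA : Set (St m n)) (hA : Hyp A SA)
    (μ : Measure (St m n)) (hprob : IsProbabilityMeasure μ)
    (hinv : μ.map (Phi A) = μ)
    (hcone : μ (cone m n) = 1) (hS0 : μ (extinct m n) = 0) :
    ∀ i, rateMu A i μ = 0 := by
  haveI := hprob
  intro i
  -- every species has at least one state
  have hn : 0 < n i := by
    by_contra hn0
    push_neg at hn0
    interval_cases h : n i
    have hsub : cone m n ⊆ extinct m n := by
      intro x hx
      refine ⟨hx, Finset.prod_eq_zero (Finset.mem_univ i) ?_⟩
      unfold snorm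
      have : IsEmpty (Fin (n i)) := by rw [h]; infer_instance
      simp
    have hle : (1 : ENNReal) ≤ 0 := by
      calc (1:ENNReal) = μ (cone m n) := hcone.symm
        _ ≤ μ (extinct m n) := measure_mono hsub
        _ = 0 := hS0
    simp at hle
  -- measure-preserving and conservative
  have hmp : MeasurePreserving (Phi A) μ μ := ⟨(phi_continuous hA).measurable, hinv⟩
  have hconsv := hmp.conservative
  -- the recurrence sets
  set E : ℕ → Set (St m n) := fun k => {y | 1 / ((k:ℝ) + 1) ≤ snorm y i} with hE
  have hEmeas : ∀ k, MeasurableSet (E k) := by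
    intro k
    have : E k = (fun y : St m n => snorm y i) ⁻¹' Set.Ici (1 / ((k:ℝ) + 1)) := rfl
    rw [this]
    exact (isClosed_Ici.preimage (snorm_continuous i)).measurableSet
  -- a.e. statements
  have h1 : ∀ᵐ x ∂μ, x ∈ cone m n := by
    refine MeasureTheory.ae_iff.2 ?_
    have hset : {x : St m n | ¬ x ∈ cone m n} = (cone m n)ᶜ := rfl
    rw [hset, measure_compl cone_isClosed.measurableSet (measure_ne_top μ _), hcone,
      measure_univ]
    simp
  have h2 : ∀ᵐ x ∂μ, x ∉ extinct m n := measure_eq_zero_iff_ae_notMem.mp hS0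
  have h3 : ∀ᵐ x ∂μ, ∀ k : ℕ, x ∈ E k → ∃ᶠ t in atTop, (Phi A)^[t] x ∈ E k :=
    ae_all_iff.2 fun k => hconsv.ae_mem_imp_frequently_image_mem (hEmeas k).nullMeasurableSet
  have hae : ∀ᵐ x ∂μ, rate A i x = 0 := by
    filter_upwards [h1, h2, h3] with x hx1 hx2 hx3
    have hxprod : ∏ i', snorm x i' ≠ 0 := fun h => hx2 ⟨hx1, h⟩
    have hxi : 0 < snorm x i := (pos_iff_ne (snorm_nonneg x i)).2
      (Finset.prod_ne_zero_iff.1 hxprod i (Finset.mem_univ i))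
    obtain ⟨k, hk⟩ := exists_nat_one_div_lt hxi
    have hxE : x ∈ E k := le_of_lt hk
    have hfreq : ∃ᶠ t in atTop, 1 / ((k:ℝ) + 1) ≤ snorm ((Phi A)^[t] x) i := hx3 k hxE
    exact rate_eq_zero_pointwise hA i hn hx1 hxi
      (show (0:ℝ) < 1 / ((k:ℝ) + 1) by positivity) hfreq
  calc rateMu A i μ = ∫ _, (0:ℝ) ∂μ := integral_congr_ae hae
    _ = 0 := integral_zero _ _

/-- Proposition 7: an invariant probability measure giving full
mass to the set of states where every species is present has zero long-term
growth rate for every species. -/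
theorem rate_zero_of_interior_measure {m : ℕ} {n : Fin m → ℕ}
    (A : St m n → Blocks m n) (SA : Set (St m n)) (hA : Hyp A SA)
    (μ : Measure (St m n)) (hprob : IsProbabilityMeasure μ)
    (hinv : μ.map (Phi A) = μ)
    (hcone : μ (cone m n) = 1) (hS0 : μ (extinct m n) = 0) :
    ∀ i, rateMu A i μ = 0 :=
  rate_zero_of_interior_measure' A SA hA μ hprob hinv hcone hS0

end RP
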